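/- Let A be a finite set. Every strongly irreducible subshift X ⊆ A^ℤ is a W-subshift. -/

import Mathlib

/-- The shift action of `ℤ` on configurations `x : ℤ → A`: `(n • x)(m) = x(m - n)`. -/
def shiftZ {A : Type*} (n : ℤ) (x : ℤ → A) : ℤ → A :=
  fun m => x (m - n)

/-- A subshift is a closed, shift-invariant subset of `A^ℤ` (with the prodiscrete
topology). -/
def IsSubshiftZ {A : Type*} [TopologicalSpace A] (X : Set (ℤ → A)) : Prop :=
  IsClosed X ∧ ∀ (n : ℤ) (x : ℤ → A), x ∈ X → shiftZ n x ∈ X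

/-- A configuration is periodic if its orbit under the shift action is finite. -/
def IsPeriodicZ {A : Type*} (x : ℤ → A) : Prop :=
  (Set.range fun n : ℤ => shiftZ n x).Finite

/-- A subshift `X ⊆ A^ℤ` is strongly irreducible if there is a finite `Δ ⊆ ℤ` such
that whenever `Ω₁, Ω₂` are finite subsets of `ℤ` with `(Ω₁ - Δ) ∩ Ω₂ = ∅`, any two
configurations of `X` can be glued along `Ω₁` and `Ω₂` inside `X`. -/
def IsStronglyIrreducibleZ {A : Type*} (X : Set (ℤ → A)) : Prop :=
  ∃ Δ : Finset ℤ, ∀ Ω₁ Ω₂ : Finset ℤ,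
    (∀ a ∈ Ω₁, ∀ d ∈ Δ, a - d ∉ Ω₂) →
    ∀ x₁ ∈ X, ∀ x₂ ∈ X, ∃ x ∈ X,
      (∀ i ∈ Ω₁, x i = x₁ i) ∧ (∀ i ∈ Ω₂, x i = x₂ i)

/-- The word `w` appears as a subword of the configuration `x : ℤ → A`. -/
def AppearsIn {A : Type*} (w : List A) (x : ℤ → A) : Prop :=
  ∃ i : ℤ, ∀ k : Fin w.length, x (i + (k.1 : ℤ)) = w.get k

/-- The language of `X ⊆ A^ℤ`: all finite words appearing in configurations of `X`. -/
def lang {A : Type*} (X : Set (ℤ → A)) : Set (List A) :=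
  {w : List A | ∃ x ∈ X, AppearsIn w x}

/-- `X ⊆ A^ℤ` is a W-subshift if there is `n₀ ≥ 0` such that any two words of its
language can be joined, within the language, by a word of length at most `n₀`. -/
def IsWSubshift {A : Type*} (X : Set (ℤ → A)) : Prop :=
  ∃ n₀ : ℕ, ∀ u ∈ lang X, ∀ v ∈ lang X,
    ∃ c ∈ lang X, c.length ≤ n₀ ∧ u ++ c ++ v ∈ lang X

/-- Every strongly irreducible subshift `X ⊆ A^ℤ` is a W-subshift. -/
theorem strongly_irreducible_is_W
    {A : Type*} [Finite A] [TopologicalSpace A] [DiscreteTopology A]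
    (X : Set (ℤ → A)) (hX : IsSubshiftZ X) (hsi : IsStronglyIrreducibleZ X) :
    IsWSubshift X := by
  obtain ⟨Δ, hΔ⟩ := hsi
  set N : ℕ := Δ.sup Int.natAbs with hNdef
  refine ⟨N, ?_⟩
  rintro u ⟨x₁, hx₁, i₁, hu⟩ v ⟨x₂, hx₂, i₂, hv⟩
  set L : ℕ := u.length with hL
  have hx₁' : shiftZ (-i₁) x₁ ∈ X := hX.2 _ _ hx₁
  have hx₂' : shiftZ ((L : ℤ) + N - i₂) x₂ ∈ X := hX.2 _ _ hx₂
  have hsep : ∀ a ∈ Finset.Ico (0 : ℤ) (L : ℤ), ∀ d ∈ Δ,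
      a - d ∉ Finset.Ico ((L : ℤ) + N) ((L : ℤ) + N + v.length) := by
    intro a ha d hd
    have hdN : d.natAbs ≤ N := Finset.le_sup hd
    simp only [Finset.mem_Ico] at ha ⊢
    omega
  obtain ⟨x, hxX, h1, h2⟩ := hΔ (Finset.Ico (0 : ℤ) (L : ℤ))
    (Finset.Ico ((L : ℤ) + N) ((L : ℤ) + N + v.length)) hsep _ hx₁' _ hx₂'
  set c : List A := List.ofFn (fun k : Fin N => x ((L : ℤ) + k)) with hc
  have hclen : c.length = N := List.length_ofFn
  refine ⟨c, ⟨x, hxX, (L : ℤ), ?_⟩, le_of_eq hclen, ⟨x, hxX, 0, ?_⟩⟩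
  · intro k
    have hk : (k : ℕ) < N := hclen ▸ k.2
    simp only [hc, List.get_eq_getElem, List.getElem_ofFn]
  · intro k
    have hk : (k : ℕ) < L + N + v.length := by
      have := k.2
      simp only [List.length_append, hclen] at this
      omega
    set m : ℕ := (k : ℕ) with hm
    simp only [List.get_eq_getElem, zero_add]
    rcases lt_or_ge m L with hmL | hmL
    · have hmL' : m < (u ++ c).length := by simp [hclen]; omega
      rw [List.getElem_append_left hmL', List.getElem_append_left hmL]
      have := h1 (m : ℤ) (by simp [Finset.mem_Ico]; omega)
      have hu' := hu ⟨m, hmL⟩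
      simp only [shiftZ, List.get_eq_getElem] at this hu'
      rw [this]
      rw [show (m : ℤ) - (-i₁) = i₁ + (m : ℤ) by ring]
      exact hu'
    · rcases lt_or_ge m (L + N) with hmN | hmN
      · have hmL' : m < (u ++ c).length := by simp [hclen]; omega
        rw [List.getElem_append_left hmL']
        rw [List.getElem_append_right hmL]
        simp only [hc, List.getElem_ofFn]
        congr 1
        push_cast
        omega
      · have hmL' : (u ++ c).length ≤ m := by simp [hclen]; omega
        rw [List.getElem_append_right hmL']
        have hmem : (m : ℤ) ∈ Finset.Ico ((L : ℤ) + N) ((L : ℤ) + N + v.length) := by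
          simp [Finset.mem_Ico]; push_cast; omega
        have := h2 (m : ℤ) hmem
        have hv' := hv ⟨m - (L + N), by omega⟩
        simp only [shiftZ, List.get_eq_getElem] at this hv'
        rw [this]
        rw [show (m : ℤ) - ((L : ℤ) + N - i₂) = i₂ + ((m - (L + N) : ℕ) : ℤ) by push_cast; omega]
        rw [hv']
        congr 1
        simp [hclen, hL]
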